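/- arXiv:2310.11893 — 2 statements merged into one kernel-verified Lean document; each statement's English description precedes it below -/
import Mathlib

section
/- Every solution (u1, u2, u3) in the nonnegative octant of the system u3 + 1 = u1 + u2, u1^2 + u2^2 + u3^2 = 1 with u2 <= u1 is of the form u1 = (1+u)/(1+u+u^2), u2 = u(1+u)/(1+u+u^2), u3 = u/(1+u+u^2) for some u in [0,1]. -/
theorem stmt_1 (u1 u2 u3 : ℝ) (h1 : 0 ≤ u1) (h2 : 0 ≤ u2) (h3 : 0 ≤ u3)
    (heq1 : u3 + 1 = u1 + u2) (heq2 : u1^2 + u2^2 + u3^2 = 1) (hle : u2 ≤ u1) :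
    ∃ u ∈ Set.Icc (0:ℝ) 1,
      u1 = (1 + u) / (1 + u + u^2) ∧
      u2 = u * (1 + u) / (1 + u + u^2) ∧
      u3 = u / (1 + u + u^2) := by
  have hu1pos : 0 < u1 := by nlinarith
  set u := u2 / u1 with hu
  have hkey : u1^2 + u2^2 + u1*u2 = u1 + u2 := by nlinarith [sq_nonneg (u3 + 1 - u1 - u2)]
  have hu0 : 0 ≤ u := div_nonneg h2 hu1pos.le
  have hu1le : u ≤ 1 := (div_le_one hu1pos).mpr hle
  have hden : 0 < 1 + u + u^2 := by positivity
  have hu2 : u2 = u * u1 := by rw [hu, div_mul_cancel₀ u2 hu1pos.ne']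
  have hu1eq : u1 = (1 + u) / (1 + u + u^2) := by
    rw [eq_div_iff hden.ne']
    nlinarith [hkey, hu2, sq_nonneg u1]
  have hu2eq : u2 = u * (1 + u) / (1 + u + u^2) := by
    rw [hu2, hu1eq]; ring
  refine ⟨u, ⟨hu0, hu1le⟩, hu1eq, hu2eq, ?_⟩
  have : u3 = u1 + u2 - 1 := by linarith
  rw [this, hu1eq, hu2eq]
  field_simp
  ring
end

section
/- For beta in (-1,1) and u in (0,1], with v1 = (1+u)/(1+u+u^2), v2 = 1, v3 = u(1+u)/(1+u+u^2), v4 = u/(1+u+u^2), one has |v2^(2beta+3/2) - v1^(2beta+3/2)| <= C*u^2 and |v4^(2beta+3/2) - v3^(2beta+3/2)| <= C*u^(2beta+5/2) for a constant C depending only on beta. -/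
open Real Set

lemma rpow_lip (p : ℝ) : ∃ L : ℝ, 0 < L ∧ ∀ x ∈ Set.Icc (1/3:ℝ) 1, ∀ y ∈ Set.Icc (1/3:ℝ) 1,
    |x ^ p - y ^ p| ≤ L * |x - y| := by
  refine ⟨|p| * ((3:ℝ) ^ (1-p) + 1) + 1, by positivity, ?_⟩
  intro x hx y hy
  have key := Convex.norm_image_sub_le_of_norm_hasDerivWithin_le
    (f := fun t : ℝ => t ^ p) (f' := fun t : ℝ => p * t ^ (p-1)) (s := Set.Icc (1/3:ℝ) 1)
    (C := |p| * ((3:ℝ) ^ (1-p) + 1))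
    (fun t ht => (Real.hasDerivAt_rpow_const (Or.inl (by linarith [ht.1] : t ≠ 0))).hasDerivWithinAt)
    ?_ ?_ hy hx
  · have := key
    rw [Real.norm_eq_abs, Real.norm_eq_abs] at this
    calc |x ^ p - y ^ p| ≤ |p| * ((3:ℝ) ^ (1-p) + 1) * |x - y| := this
      _ ≤ (|p| * ((3:ℝ) ^ (1-p) + 1) + 1) * |x - y| := by
          apply mul_le_mul_of_nonneg_right _ (abs_nonneg _); linarith
  · intro t ht
    have ht0 : (0:ℝ) < t := by linarith [ht.1]
    rw [Real.norm_eq_abs, abs_mul, abs_of_nonneg (Real.rpow_nonneg ht0.le _)]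
    have hbd : t ^ (p-1) ≤ (3:ℝ) ^ (1-p) + 1 := by
      rcases le_or_gt (p-1) 0 with h | h
      · have h13 : (1/3:ℝ) ≤ t := ht.1
        have := Real.rpow_le_rpow_of_nonpos (by norm_num : (0:ℝ) < 1/3) h13 h
        have heq : ((1/3:ℝ)) ^ (p-1) = (3:ℝ) ^ (1-p) := by
          rw [one_div, ← Real.rpow_neg_one 3, ← Real.rpow_mul (by norm_num : (0:ℝ) ≤ 3)]
          ring_nf
        nlinarith [this, heq]
      · have h1 : t ^ (p-1) ≤ 1 := Real.rpow_le_one ht0.le ht.2 h.le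
        have : (0:ℝ) ≤ (3:ℝ) ^ (1-p) := Real.rpow_nonneg (by norm_num) _
        linarith
    exact mul_le_mul_of_nonneg_left hbd (abs_nonneg _)
  · exact convex_Icc _ _

theorem stmt_14 (β : ℝ) (hβ : β ∈ Set.Ioo (-1:ℝ) 1) :
    ∃ C : ℝ, 0 < C ∧ ∀ u ∈ Set.Ioc (0:ℝ) 1,
      let v1 := (1 + u) / (1 + u + u^2)
      let v2 := (1:ℝ)
      let v3 := u * (1 + u) / (1 + u + u^2)
      let v4 := u / (1 + u + u^2)
      |v2 ^ (2*β + 3/2) - v1 ^ (2*β + 3/2)| ≤ C * u^2 ∧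
      |v4 ^ (2*β + 3/2) - v3 ^ (2*β + 3/2)| ≤ C * u ^ (2*β + 5/2) := by
  set p : ℝ := 2*β + 3/2 with hp
  obtain ⟨L, hL, hlip⟩ := rpow_lip p
  refine ⟨L, hL, ?_⟩
  intro u hu
  obtain ⟨hu0, hu1⟩ := hu
  intro v1 v2 v3 v4
  have hd : (0:ℝ) < 1 + u + u^2 := by positivity
  have hd1 : (1:ℝ) ≤ 1 + u + u^2 := by nlinarith
  have hd3 : 1 + u + u^2 ≤ 3 := by nlinarith
  -- membership of v1 and w := 1/(d)
  have hv1mem : v1 ∈ Set.Icc (1/3:ℝ) 1 := by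
    constructor
    · rw [div_le_div_iff₀ (by norm_num) hd]; nlinarith
    · rw [div_le_one hd]; nlinarith
  have hwmem : (1/(1+u+u^2)) ∈ Set.Icc (1/3:ℝ) 1 := by
    constructor
    · rw [div_le_div_iff₀ (by norm_num) hd]; nlinarith
    · rw [div_le_one hd]; nlinarith
  have h1mem : (1:ℝ) ∈ Set.Icc (1/3:ℝ) 1 := by norm_num
  constructor
  · have := hlip 1 h1mem v1 hv1mem
    have habs : |1 - v1| ≤ u^2 := by
      have hv : 1 - v1 = u^2 / (1+u+u^2) := by
        show 1 - (1 + u) / (1 + u + u^2) = _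
        rw [eq_div_iff hd.ne', sub_mul, div_mul_cancel₀ _ hd.ne']; ring
      rw [hv, abs_of_nonneg (by positivity)]
      calc u^2 / (1+u+u^2) ≤ u^2 / 1 := by
            apply div_le_div_of_nonneg_left (by positivity) (by norm_num) hd1
        _ = u^2 := by ring
    calc |v2 ^ p - v1 ^ p| = |(1:ℝ) ^ p - v1 ^ p| := by rfl
      _ ≤ L * |1 - v1| := this
      _ ≤ L * u^2 := by apply mul_le_mul_of_nonneg_left habs hL.le
  · have hlip2 := hlip (1/(1+u+u^2)) hwmem v1 hv1mem
    have hv3 : v3 = u * v1 := by show u * (1 + u) / (1 + u + u^2) = _; rw [mul_div_assoc]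
    have hv4 : v4 = u * (1/(1+u+u^2)) := by show u / (1 + u + u^2) = _; rw [mul_one_div]
    have hsplit : |v4 ^ p - v3 ^ p| = u ^ p * |(1/(1+u+u^2)) ^ p - v1 ^ p| := by
      rw [hv3, hv4, Real.mul_rpow hu0.le (by positivity), Real.mul_rpow hu0.le (by positivity),
        ← mul_sub, abs_mul, abs_of_nonneg (Real.rpow_nonneg hu0.le _)]
    have habs : |1/(1+u+u^2) - v1| ≤ u := by
      have hv : v1 - 1/(1+u+u^2) = u / (1+u+u^2) := by
        show (1 + u) / (1 + u + u^2) - 1/(1+u+u^2) = _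
        rw [eq_div_iff hd.ne', sub_mul, div_mul_cancel₀ _ hd.ne', div_mul_cancel₀ _ hd.ne']; ring
      rw [abs_sub_comm, hv, abs_of_nonneg (by positivity)]
      calc u / (1+u+u^2) ≤ u / 1 := by
            apply div_le_div_of_nonneg_left hu0.le (by norm_num) hd1
        _ = u := by ring
    have hpow : u ^ (2*β + 5/2) = u ^ p * u := by
      rw [hp, show (2*β + 5/2 : ℝ) = (2*β + 3/2) + 1 by ring, Real.rpow_add hu0, Real.rpow_one]
    calc |v4 ^ p - v3 ^ p| = u ^ p * |(1/(1+u+u^2)) ^ p - v1 ^ p| := hsplit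
      _ ≤ u ^ p * (L * u) := by
          apply mul_le_mul_of_nonneg_left _ (Real.rpow_nonneg hu0.le _)
          calc |(1/(1+u+u^2)) ^ p - v1 ^ p| ≤ L * |1/(1+u+u^2) - v1| := hlip2
            _ ≤ L * u := mul_le_mul_of_nonneg_left habs hL.le
      _ = L * (u ^ p * u) := by ring
      _ = L * u ^ (2*β + 5/2) := by rw [hpow]
end
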